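/- The set S²_{i,j} of 2-tails Z of a nodal curve C with C_i ∪ C_j ⊆ Z and C_1 ⊆ Z^c is closed under intersection: if Z, Z' ∈ S²_{i,j}, then Z ∧ Z' ∈ S²_{i,j}. -/

import Mathlib

open Set

/- Dual multigraph model of a nodal curve: vertices `V` are irreducible
components, edges `E` are nodes, with endpoint maps `s t : E → V`. -/

/-- The set of terminal points (edges of the cut) of a vertex subset `Z`. -/
def TermPts {V E : Type} (s t : E → V) (Z : Set V) : Set E :=
  {e | (s e ∈ Z ∧ t e ∉ Z) ∨ (t e ∈ Z ∧ s e ∉ Z)}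

/-- A subcurve is a nonempty proper subset of the components. -/
def Subcurve {V : Type} (Z : Set V) : Prop := Z.Nonempty ∧ Z ≠ Set.univ

/-- Connectivity of the induced sub-multigraph on `Z`. -/
def ConnOn {V E : Type} (s t : E → V) (Z : Set V) : Prop :=
  ∀ x ∈ Z, ∀ y ∈ Z,
    Relation.ReflTransGen
      (fun a b => a ∈ Z ∧ b ∈ Z ∧ ∃ e, (s e = a ∧ t e = b) ∨ (s e = b ∧ t e = a)) x y

/-- A tail is a subcurve with both sides connected. -/
def IsTail {V E : Type} (s t : E → V) (Z : Set V) : Prop :=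
  Subcurve Z ∧ ConnOn s t Z ∧ ConnOn s t Zᶜ

/-- `k_Z`, the number of terminal points of `Z`. -/
noncomputable def kcut {V E : Type} (s t : E → V) (Z : Set V) : ℕ :=
  (TermPts s t Z).ncard

/-- The pair `(Z, Z')` is free if the edge cuts are disjoint. -/
def FreePair {V E : Type} (s t : E → V) (Z Z' : Set V) : Prop :=
  TermPts s t Z ∩ TermPts s t Z' = ∅

/-- The pair `(Z, Z')` is perfect. -/
def PerfectPair {V : Type} (Z Z' : Set V) : Prop :=
  Z ⊆ Z' ∨ Z' ⊆ Z ∨ Zᶜ ⊆ Z' ∨ Z' ⊆ Zᶜ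
/-- `S²_{i,j}`: the 2-tails containing `vi, vj` and omitting `v1`. -/
def S2set {V E : Type} (s t : E → V) (v1 vi vj : V) : Set (Set V) :=
  {Z | IsTail s t Z ∧ kcut s t Z = 2 ∧ vi ∈ Z ∧ vj ∈ Z ∧ v1 ∉ Z}

/-- The levels of the inductive construction of the set of nested tails:
level `0` is `S` itself, and level `m+1` consists of the members `Z` of `S`
with `W_m ◁ Z`, where `W_m` is the intersection of the members of level `m`. -/
def Tlevel {V E : Type} (s t : E → V) (S : Set (Set V)) : ℕ → Set (Set V)
  | 0 => S
  | (m + 1) =>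
      {Z | Z ∈ S ∧ ⋂₀ Tlevel s t S m ⊂ Z ∧ FreePair s t (⋂₀ Tlevel s t S m) Z}

/-- The set of nested tails extracted from `S`: the tails `W_m = ⋂ (level m)`
for all `m` with level `m` nonempty. -/
def Tset {V E : Type} (s t : E → V) (S : Set (Set V)) : Set (Set V) :=
  {X | ∃ m, (Tlevel s t S m).Nonempty ∧ X = ⋂₀ Tlevel s t S m}

/-- `T²_{i,j}`, the set of nested 2-tails with respect to `(i, j)`. -/
def T2set {V E : Type} (s t : E → V) (v1 vi vj : V) : Set (Set V) :=
  Tset s t (S2set s t v1 vi vj)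

/-- `S³_{i,j}`: the `T²_{i,j}`-free 3-tails containing `vi, vj`, omitting `v1`. -/
def S3set {V E : Type} (s t : E → V) (v1 vi vj : V) : Set (Set V) :=
  {Z | IsTail s t Z ∧ kcut s t Z = 3 ∧ vi ∈ Z ∧ vj ∈ Z ∧ v1 ∉ Z ∧
        ∀ W ∈ T2set s t v1 vi vj, FreePair s t Z W}

/-- `T³_{i,j}`, the set of nested 3-tails with respect to `(i, j)`. -/
def T3set {V E : Type} (s t : E → V) (v1 vi vj : V) : Set (Set V) :=
  Tset s t (S3set s t v1 vi vj)

/-- The set `S²_{i,j}` of 2-tails containing `v_i, v_j` and omitting `v_1` is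
closed under intersection. -/


def Walk {V E : Type} (s t : E → V) (W : Set V) : V → V → Prop :=
  Relation.ReflTransGen
    (fun a b => a ∈ W ∧ b ∈ W ∧ ∃ e, (s e = a ∧ t e = b) ∨ (s e = b ∧ t e = a))

lemma walk_mono {V E : Type} {s t : E → V} {W W' : Set V} (h : W ⊆ W')
    {x y : V} (hxy : Walk s t W x y) : Walk s t W' x y :=
  Relation.ReflTransGen.mono (r := (fun a b => a ∈ W ∧ b ∈ W ∧ ∃ e, (s e = a ∧ t e = b) ∨ (s e = b ∧ t e = a))) (p := (fun a b => a ∈ W' ∧ b ∈ W' ∧ ∃ e, (s e = a ∧ t e = b) ∨ (s e = b ∧ t e = a)))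
    (fun _ _ ⟨ha, hb, he⟩ => ⟨h ha, h hb, he⟩) _ _ hxy

lemma walk_symm {V E : Type} {s t : E → V} {W : Set V}
    {x y : V} (hxy : Walk s t W x y) : Walk s t W y x :=
  @Std.Symm.symm _ _ (@Relation.ReflTransGen.stdSymm _ (fun a b => a ∈ W ∧ b ∈ W ∧ ∃ e, (s e = a ∧ t e = b) ∨ (s e = b ∧ t e = a))
    ⟨fun _ _ ⟨ha, hb, e, he⟩ => ⟨hb, ha, e, he.symm⟩⟩) _ _ hxy

lemma walk_cross {V E : Type} {s t : E → V} {W : Set V} (P : Set V)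
    {x y : V} (hx : x ∈ P) (hxy : Walk s t W x y) : y ∉ P →
    ∃ e, (s e ∈ W ∧ t e ∈ W) ∧ ((s e ∈ P ∧ t e ∉ P) ∨ (t e ∈ P ∧ s e ∉ P)) := by
  induction hxy with
  | refl => exact fun h => absurd hx h
  | tail hw hstep ih =>
    intro hy
    obtain ⟨hbW, hcW, e, he⟩ := hstep
    rename_i c y'
    by_cases hc : c ∈ P
    · refine ⟨e, ⟨?_, ?_⟩, ?_⟩
      · rcases he with ⟨h1, _⟩ | ⟨h1, _⟩
        · exact h1 ▸ hbW
        · exact h1 ▸ hcW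
      · rcases he with ⟨_, h2⟩ | ⟨_, h2⟩
        · exact h2 ▸ hcW
        · exact h2 ▸ hbW
      · rcases he with ⟨h1, h2⟩ | ⟨h1, h2⟩
        · exact Or.inl ⟨h1 ▸ hc, h2 ▸ hy⟩
        · exact Or.inr ⟨h2 ▸ hc, h1 ▸ hy⟩
    · exact ih hc

lemma walk_reroute {V E : Type} {s t : E → V} {A B : Set V}
    (hAB : ∀ a, a ∈ A → a ∉ B) (f : E) (a₁ b₁ : V)
    (_ha₁ : a₁ ∈ A) (hb₁ : b₁ ∈ B)
    (hf : (s f = a₁ ∧ t f = b₁) ∨ (s f = b₁ ∧ t f = a₁))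
    (huniq : ∀ e, (s e ∈ A ∧ t e ∈ B) ∨ (s e ∈ B ∧ t e ∈ A) → e = f)
    {x y : V} (hx : x ∈ A) (hxy : Walk s t (A ∪ B) x y) :
    (y ∈ A → Walk s t A x y) ∧ (y ∈ B → Walk s t A x a₁) := by
  induction hxy with
  | refl => exact ⟨fun _ => Relation.ReflTransGen.refl, fun hB => absurd hB (hAB x hx)⟩
  | tail hw hstep ih =>
    rename_i c y'
    obtain ⟨hcW, hyW, e, he⟩ := hstep
    -- he : (s e = c ∧ t e = y') ∨ (s e = y' ∧ t e = c)
    have key : ∀ (hcA : c ∈ A) (hyB : y' ∈ B), c = a₁ := by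
      intro hcA hyB
      have hef : e = f := by
        apply huniq
        rcases he with ⟨h1, h2⟩ | ⟨h1, h2⟩
        · exact Or.inl ⟨h1 ▸ hcA, h2 ▸ hyB⟩
        · exact Or.inr ⟨h1 ▸ hyB, h2 ▸ hcA⟩
      subst hef
      rcases he with ⟨h1, h2⟩ | ⟨h1, h2⟩ <;> rcases hf with ⟨g1, g2⟩ | ⟨g1, g2⟩
      · exact (h1.symm.trans g1)
      · exact absurd hb₁ ((h1.symm.trans g1) ▸ hAB c hcA)
      · exact absurd hb₁ ((h2.symm.trans g2) ▸ hAB c hcA)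
      · exact (h2.symm.trans g2)
    have key2 : ∀ (hcB : c ∈ B) (hyA : y' ∈ A), y' = a₁ := by
      intro hcB hyA
      have hef : e = f := by
        apply huniq
        rcases he with ⟨h1, h2⟩ | ⟨h1, h2⟩
        · exact Or.inr ⟨h1 ▸ hcB, h2 ▸ hyA⟩
        · exact Or.inl ⟨h1 ▸ hyA, h2 ▸ hcB⟩
      subst hef
      rcases he with ⟨h1, h2⟩ | ⟨h1, h2⟩ <;> rcases hf with ⟨g1, g2⟩ | ⟨g1, g2⟩
      · exact absurd hb₁ ((h2.symm.trans g2) ▸ hAB y' hyA)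
      · exact (h2.symm.trans g2)
      · exact (h1.symm.trans g1)
      · exact absurd hb₁ ((h1.symm.trans g1) ▸ hAB y' hyA)
    rcases hcW with hcA | hcB
    · rcases hyW with hyA | hyB
      · exact ⟨fun _ => ih.1 hcA |>.tail ⟨hcA, hyA, e, he⟩,
          fun hyB => absurd hyB (hAB y' hyA)⟩
      · refine ⟨fun hyA => absurd hyB (hAB y' hyA), fun _ => ?_⟩
        have := key hcA hyB
        exact this ▸ ih.1 hcA
    · rcases hyW with hyA | hyB
      · refine ⟨fun _ => ?_, fun hyB => absurd hyB (hAB y' hyA)⟩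
        have := key2 hcB hyA
        exact this ▸ ih.2 hcB
      · exact ⟨fun hyA => absurd hyB (hAB y' hyA), fun _ => ih.2 hcB⟩

theorem stmt_13 {V E : Type} [Fintype V] [Fintype E] (s t : E → V)
    (hC : ConnOn s t Set.univ) (v1 vi vj : V) (Z Z' : Set V)
    (hZ : Z ∈ S2set s t v1 vi vj) (hZ' : Z' ∈ S2set s t v1 vi vj) :
    Z ∩ Z' ∈ S2set s t v1 vi vj := by
  have hZ0 := hZ
  have hZ0' := hZ'
  obtain ⟨⟨⟨hZne, hZpr⟩, hZc, hZcc⟩, hk, hvi, hvj, hv1⟩ := hZ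
  obtain ⟨⟨⟨hZ'ne, hZ'pr⟩, hZ'c, hZ'cc⟩, hk', hvi', hvj', hv1'⟩ := hZ'
  by_cases hBne : (Z \ Z').Nonempty
  swap
  · have hsub : Z ⊆ Z' := fun x hx => by
      by_contra h; exact hBne ⟨x, hx, h⟩
    rw [Set.inter_eq_left.mpr hsub]; exact hZ0
  by_cases hCne : (Z' \ Z).Nonempty
  swap
  · have hsub : Z' ⊆ Z := fun x hx => by
      by_contra h; exact hCne ⟨x, hx, h⟩
    rw [Set.inter_eq_right.mpr hsub]; exact hZ0'
  obtain ⟨b, hbZ, hbZ'⟩ := hBne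
  obtain ⟨c, hcZ', hcZ⟩ := hCne
  -- the four boundary edges
  obtain ⟨f₁, ⟨hf₁s, hf₁t⟩, hf₁o⟩ := walk_cross Z' hvi' (hZc vi hvi b hbZ) hbZ'
  have hf1 : (s f₁ ∈ Z ∩ Z' ∧ t f₁ ∈ Z \ Z') ∨ (s f₁ ∈ Z \ Z' ∧ t f₁ ∈ Z ∩ Z') := by
    rcases hf₁o with ⟨h1, h2⟩ | ⟨h1, h2⟩
    · exact Or.inl ⟨⟨hf₁s, h1⟩, ⟨hf₁t, h2⟩⟩
    · exact Or.inr ⟨⟨hf₁s, h2⟩, ⟨hf₁t, h1⟩⟩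
  obtain ⟨f₂, ⟨hf₂s, hf₂t⟩, hf₂o⟩ := walk_cross Z hvi (hZ'c vi hvi' c hcZ') hcZ
  have hf2 : (s f₂ ∈ Z ∩ Z' ∧ t f₂ ∈ Z' \ Z) ∨ (s f₂ ∈ Z' \ Z ∧ t f₂ ∈ Z ∩ Z') := by
    rcases hf₂o with ⟨h1, h2⟩ | ⟨h1, h2⟩
    · exact Or.inl ⟨⟨h1, hf₂s⟩, ⟨hf₂t, h2⟩⟩
    · exact Or.inr ⟨⟨hf₂s, h2⟩, ⟨h1, hf₂t⟩⟩
  obtain ⟨g₁, ⟨hg₁s, hg₁t⟩, hg₁o⟩ := walk_cross Z hbZ (hZ'cc b hbZ' v1 hv1') hv1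
  have hg1 : (s g₁ ∈ Z \ Z' ∧ t g₁ ∉ Z ∧ t g₁ ∉ Z') ∨
      (t g₁ ∈ Z \ Z' ∧ s g₁ ∉ Z ∧ s g₁ ∉ Z') := by
    rcases hg₁o with ⟨h1, h2⟩ | ⟨h1, h2⟩
    · exact Or.inl ⟨⟨h1, hg₁s⟩, h2, hg₁t⟩
    · exact Or.inr ⟨⟨h1, hg₁t⟩, h2, hg₁s⟩
  obtain ⟨g₂, ⟨hg₂s, hg₂t⟩, hg₂o⟩ := walk_cross Z' hcZ' (hZcc c hcZ v1 hv1) hv1'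
  have hg2 : (s g₂ ∈ Z' \ Z ∧ t g₂ ∉ Z ∧ t g₂ ∉ Z') ∨
      (t g₂ ∈ Z' \ Z ∧ s g₂ ∉ Z ∧ s g₂ ∉ Z') := by
    rcases hg₂o with ⟨h1, h2⟩ | ⟨h1, h2⟩
    · exact Or.inl ⟨⟨h1, hg₂s⟩, hg₂t, h2⟩
    · exact Or.inr ⟨⟨h1, hg₂t⟩, hg₂s, h2⟩
  -- basic endpoint facts
  have hg1nZ' : s g₁ ∉ Z' ∧ t g₁ ∉ Z' := by
    rcases hg1 with ⟨h1, h2, h3⟩ | ⟨h1, h2, h3⟩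
    · exact ⟨h1.2, h3⟩
    · exact ⟨h3, h1.2⟩
  have hg2nZ : s g₂ ∉ Z ∧ t g₂ ∉ Z := by
    rcases hg2 with ⟨h1, h2, h3⟩ | ⟨h1, h2, h3⟩
    · exact ⟨h1.2, h2⟩
    · exact ⟨h2, h1.2⟩
  have hf1Z : s f₁ ∈ Z ∧ t f₁ ∈ Z := ⟨hf₁s, hf₁t⟩
  have hf2Z' : s f₂ ∈ Z' ∧ t f₂ ∈ Z' := by
    rcases hf2 with ⟨h1, h2⟩ | ⟨h1, h2⟩
    · exact ⟨h1.2, h2.1⟩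
    · exact ⟨h1.1, h2.2⟩
  -- cut memberships
  have hf2cut : f₂ ∈ TermPts s t Z := by
    rcases hf2 with ⟨h1, h2⟩ | ⟨h1, h2⟩
    · exact Or.inl ⟨h1.1, h2.2⟩
    · exact Or.inr ⟨h2.1, h1.2⟩
  have hg1cut : g₁ ∈ TermPts s t Z := by
    rcases hg1 with ⟨h1, h2, _⟩ | ⟨h1, h2, _⟩
    · exact Or.inl ⟨h1.1, h2⟩
    · exact Or.inr ⟨h1.1, h2⟩
  have hf1cut : f₁ ∈ TermPts s t Z' := by
    rcases hf1 with ⟨h1, h2⟩ | ⟨h1, h2⟩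
    · exact Or.inl ⟨h1.2, h2.2⟩
    · exact Or.inr ⟨h2.2, h1.2⟩
  have hg2cut : g₂ ∈ TermPts s t Z' := by
    rcases hg2 with ⟨h1, _, h3⟩ | ⟨h1, _, h3⟩
    · exact Or.inl ⟨h1.1, h3⟩
    · exact Or.inr ⟨h1.1, h3⟩
  have hne1 : f₂ ≠ g₁ := fun h => hg1nZ'.1 (h ▸ hf2Z'.1)
  have hne2 : f₁ ≠ g₂ := fun h => hg2nZ.1 (h ▸ hf1Z.1)
  -- the cuts are exactly these pairs
  have hZcut : TermPts s t Z = {f₂, g₁} := by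
    symm
    apply Set.eq_of_subset_of_ncard_le
    · rintro e (rfl | rfl)
      · exact hf2cut
      · exact hg1cut
    · rw [show (TermPts s t Z).ncard = 2 from hk, Set.ncard_pair hne1]
    · exact Set.toFinite _
  have hZ'cut : TermPts s t Z' = {f₁, g₂} := by
    symm
    apply Set.eq_of_subset_of_ncard_le
    · rintro e (rfl | rfl)
      · exact hf1cut
      · exact hg2cut
    · rw [show (TermPts s t Z').ncard = 2 from hk', Set.ncard_pair hne2]
    · exact Set.toFinite _
  -- uniqueness of the A-B edge
  have huniq : ∀ e, (s e ∈ Z ∩ Z' ∧ t e ∈ Z \ Z') ∨ (s e ∈ Z \ Z' ∧ t e ∈ Z ∩ Z') →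
      e = f₁ := by
    intro e he
    have hecut : e ∈ TermPts s t Z' := by
      rcases he with ⟨h1, h2⟩ | ⟨h1, h2⟩
      · exact Or.inl ⟨h1.2, h2.2⟩
      · exact Or.inr ⟨h2.2, h1.2⟩
    rw [hZ'cut] at hecut
    simp only [Set.mem_insert_iff, Set.mem_singleton_iff] at hecut
    rcases hecut with rfl | rfl
    · rfl
    · exfalso
      rcases he with ⟨h1, _⟩ | ⟨h1, _⟩
      · exact hg2nZ.1 h1.1
      · exact hg2nZ.1 h1.1
  -- the cut of the intersection
  have hne3 : f₁ ≠ f₂ := by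
    intro h
    rcases hf1 with ⟨h1, h2⟩ | ⟨h1, h2⟩
    · exact h2.2 (h ▸ hf2Z'.2)
    · exact h1.2 (h ▸ hf2Z'.1)
  have hAcut : TermPts s t (Z ∩ Z') = {f₁, f₂} := by
    ext e
    simp only [Set.mem_insert_iff, Set.mem_singleton_iff]
    constructor
    · rintro (⟨h1, h2⟩ | ⟨h1, h2⟩)
      · by_cases ht : t e ∈ Z'
        · have htZ : t e ∉ Z := fun hz => h2 ⟨hz, ht⟩
          have : e ∈ TermPts s t Z := Or.inl ⟨h1.1, htZ⟩
          rw [hZcut] at this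
          simp only [Set.mem_insert_iff, Set.mem_singleton_iff] at this
          rcases this with rfl | rfl
          · exact Or.inr rfl
          · exact absurd h1.2 hg1nZ'.1
        · have : e ∈ TermPts s t Z' := Or.inl ⟨h1.2, ht⟩
          rw [hZ'cut] at this
          simp only [Set.mem_insert_iff, Set.mem_singleton_iff] at this
          rcases this with rfl | rfl
          · exact Or.inl rfl
          · exact absurd h1.1 hg2nZ.1
      · by_cases hs : s e ∈ Z'
        · have hsZ : s e ∉ Z := fun hz => h2 ⟨hz, hs⟩
          have : e ∈ TermPts s t Z := Or.inr ⟨h1.1, hsZ⟩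
          rw [hZcut] at this
          simp only [Set.mem_insert_iff, Set.mem_singleton_iff] at this
          rcases this with rfl | rfl
          · exact Or.inr rfl
          · exact absurd h1.2 hg1nZ'.2
        · have : e ∈ TermPts s t Z' := Or.inr ⟨h1.2, hs⟩
          rw [hZ'cut] at this
          simp only [Set.mem_insert_iff, Set.mem_singleton_iff] at this
          rcases this with rfl | rfl
          · exact Or.inl rfl
          · exact absurd h1.1 hg2nZ.2
    · rintro (rfl | rfl)
      · rcases hf1 with ⟨h1, h2⟩ | ⟨h1, h2⟩
        · exact Or.inl ⟨h1, fun hc => h2.2 hc.2⟩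
        · exact Or.inr ⟨h2, fun hc => h1.2 hc.2⟩
      · rcases hf2 with ⟨h1, h2⟩ | ⟨h1, h2⟩
        · exact Or.inl ⟨h1, fun hc => h2.2 hc.1⟩
        · exact Or.inr ⟨h2, fun hc => h1.2 hc.1⟩
  have hkA : kcut s t (Z ∩ Z') = 2 := by
    unfold kcut
    rw [hAcut, Set.ncard_pair hne3]
  -- connectivity of the intersection
  have hdisj : ∀ a, a ∈ Z ∩ Z' → a ∉ Z \ Z' := fun a ha hb => hb.2 ha.2
  have hconnA : ConnOn s t (Z ∩ Z') := by
    intro x hx y hy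
    have hw : Walk s t (Z ∩ Z' ∪ Z \ Z') x y := by
      rw [Set.inter_union_diff]; exact hZc x hx.1 y hy.1
    rcases hf1 with ⟨h1, h2⟩ | ⟨h1, h2⟩
    · exact (walk_reroute hdisj f₁ (s f₁) (t f₁) h1 h2 (Or.inl ⟨rfl, rfl⟩) huniq hx hw).1 hy
    · exact (walk_reroute hdisj f₁ (t f₁) (s f₁) h2 h1 (Or.inr ⟨rfl, rfl⟩) huniq hx hw).1 hy
  -- connectivity of the complement
  have hsub1 : Zᶜ ⊆ (Z ∩ Z')ᶜ := Set.compl_subset_compl.2 Set.inter_subset_left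
  have hsub2 : Z'ᶜ ⊆ (Z ∩ Z')ᶜ := Set.compl_subset_compl.2 Set.inter_subset_right
  have hto1 : ∀ x ∈ (Z ∩ Z')ᶜ, Walk s t (Z ∩ Z')ᶜ x v1 := by
    intro x hx
    have : x ∉ Z ∨ x ∉ Z' := by
      by_contra h
      push_neg at h
      exact hx ⟨h.1, h.2⟩
    rcases this with h | h
    · exact walk_mono hsub1 (hZcc x h v1 hv1)
    · exact walk_mono hsub2 (hZ'cc x h v1 hv1')
  have hcompl : ConnOn s t (Z ∩ Z')ᶜ := fun x hx y hy =>
    (hto1 x hx).trans (walk_symm (hto1 y hy))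
  exact ⟨⟨⟨⟨vi, hvi, hvi'⟩, fun h => hv1 (h.symm ▸ Set.mem_univ v1).1⟩, hconnA, hcompl⟩,
    hkA, ⟨hvi, hvi'⟩, ⟨hvj, hvj'⟩, fun h => hv1 h.1⟩
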